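/- Let A, B be real symmetric positive definite n×n matrices. Then min over U ∈ O(n) of ‖√A − √B·U‖_F² equals Tr(A) + Tr(B) − 2·Tr(√(√A·B·√A)). -/

import Mathlib

open Matrix BigOperators

open Classical in
noncomputable def msqrt {n : ℕ} (M : Matrix (Fin n) (Fin n) ℝ) : Matrix (Fin n) (Fin n) ℝ :=
  if h : M.PosSemidef then
    (h.1.eigenvectorUnitary : Matrix (Fin n) (Fin n) ℝ) *
      diagonal ((↑) ∘ Real.sqrt ∘ h.1.eigenvalues) *
      (star h.1.eigenvectorUnitary : Matrix (Fin n) (Fin n) ℝ)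
  else 0

noncomputable def fnorm {n : ℕ} (A : Matrix (Fin n) (Fin n) ℝ) : ℝ :=
  Real.sqrt (∑ i, ∑ j, (A i j) ^ 2)

lemma msqrt_eq {n : ℕ} {M : Matrix (Fin n) (Fin n) ℝ} (h : M.PosSemidef) :
    msqrt M = (h.1.eigenvectorUnitary : Matrix (Fin n) (Fin n) ℝ) *
      diagonal (Real.sqrt ∘ h.1.eigenvalues) *
      (star h.1.eigenvectorUnitary : Matrix (Fin n) (Fin n) ℝ) := dif_pos h

lemma msqrt_psd {n : ℕ} {M : Matrix (Fin n) (Fin n) ℝ} (h : M.PosSemidef) :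
    (msqrt M).PosSemidef := by
  rw [msqrt_eq h, star_eq_conjTranspose]
  apply PosSemidef.mul_mul_conjTranspose_same
  rw [posSemidef_diagonal_iff]
  intro i
  exact Real.sqrt_nonneg _

lemma msqrt_mul_self {n : ℕ} {M : Matrix (Fin n) (Fin n) ℝ} (h : M.PosSemidef) :
    msqrt M * msqrt M = M := by
  rw [msqrt_eq h]
  conv_rhs => rw [h.1.spectral_theorem, Unitary.conjStarAlgAut_apply]
  have hU : (star h.1.eigenvectorUnitary : Matrix (Fin n) (Fin n) ℝ) *
      (h.1.eigenvectorUnitary : Matrix (Fin n) (Fin n) ℝ) = 1 := Unitary.coe_star_mul_self _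
  have hD : diagonal (Real.sqrt ∘ h.1.eigenvalues) * diagonal (Real.sqrt ∘ h.1.eigenvalues)
      = diagonal (RCLike.ofReal ∘ h.1.eigenvalues) := by
    rw [diagonal_mul_diagonal]
    congr 1
    funext i
    simp [Real.mul_self_sqrt (h.eigenvalues_nonneg i)]
  calc _ = (h.1.eigenvectorUnitary : Matrix (Fin n) (Fin n) ℝ) *
      (diagonal (Real.sqrt ∘ h.1.eigenvalues) * ((star h.1.eigenvectorUnitary : Matrix (Fin n) (Fin n) ℝ) *
      (h.1.eigenvectorUnitary : Matrix (Fin n) (Fin n) ℝ)) * diagonal (Real.sqrt ∘ h.1.eigenvalues)) *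
      (star h.1.eigenvectorUnitary : Matrix (Fin n) (Fin n) ℝ) := by simp only [Matrix.mul_assoc]
    _ = _ := by rw [hU, Matrix.mul_one, hD]

lemma msqrt_transpose {n : ℕ} {M : Matrix (Fin n) (Fin n) ℝ} (h : M.PosSemidef) :
    (msqrt M)ᵀ = msqrt M := by
  have h1 := (msqrt_psd h).1
  rwa [Matrix.IsHermitian, conjTranspose_eq_transpose_of_trivial] at h1

/-- Sum of squared entries equals trace of `Mᵀ * M`. -/
lemma sum_sq_eq_trace {n : ℕ} (M : Matrix (Fin n) (Fin n) ℝ) :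
    ∑ i, ∑ j, (M i j) ^ 2 = (Mᵀ * M).trace := by
  rw [Matrix.trace]
  simp only [Matrix.diag, Matrix.mul_apply, Matrix.transpose_apply]
  rw [Finset.sum_comm]
  simp [sq]

/-- Orthogonal-times-PSD trace bound: `tr (V * S) ≤ tr S`. -/
lemma trace_orth_mul_le {n : ℕ} (V S : Matrix (Fin n) (Fin n) ℝ)
    (hV : Vᵀ * V = 1) (hS : S.PosSemidef) : (V * S).trace ≤ S.trace := by
  set R := msqrt S with hRdef
  have hRR : R * R = S := msqrt_mul_self hS
  have hRsym : Rᵀ = R := msqrt_transpose hS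
  have htr : (V * S).trace = (R * (V * R)).trace := by
    rw [← hRR, ← Matrix.mul_assoc, Matrix.trace_mul_comm]
  rw [htr, ← hRR, Matrix.trace, Matrix.trace]
  apply Finset.sum_le_sum
  intro i _
  have hc : ∀ j, R i j = R j i := fun j =>
    (congrFun (congrFun hRsym i) j).symm.trans (Matrix.transpose_apply R i j)
  have hd1 : (R * (V * R)).diag i =
      (fun k => R k i) ⬝ᵥ (V *ᵥ fun k => R k i) := by
    simp only [Matrix.diag, Matrix.mul_apply, Matrix.mulVec, dotProduct]
    exact Finset.sum_congr rfl fun j _ => by rw [hc j]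
  have hd2 : (R * R).diag i = (fun k => R k i) ⬝ᵥ (fun k => R k i) := by
    simp only [Matrix.diag, Matrix.mul_apply, dotProduct]
    exact Finset.sum_congr rfl fun j _ => by rw [hc j]
  show (R * (V * R)).diag i ≤ (R * R).diag i
  rw [hd1, hd2]
  set c : Fin n → ℝ := fun k => R k i
  have hnorm : (V *ᵥ c) ⬝ᵥ (V *ᵥ c) = c ⬝ᵥ c := by
    have h1 : (V *ᵥ c) ⬝ᵥ (V *ᵥ c) = ((V *ᵥ c) ᵥ* V) ⬝ᵥ c := dotProduct_mulVec _ _ _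
    have h2 : (V *ᵥ c) ᵥ* V = (Vᵀ * V) *ᵥ c := by
      rw [← Matrix.mulVec_transpose, Matrix.mulVec_mulVec]
    rw [h1, h2, hV, Matrix.one_mulVec]
  have hcs := Finset.sum_mul_sq_le_sq_mul_sq Finset.univ c (fun j => (V *ᵥ c) j)
  have hxx : c ⬝ᵥ c = ∑ j, c j ^ 2 := by simp [dotProduct, sq]
  have hyy : (V *ᵥ c) ⬝ᵥ (V *ᵥ c) = ∑ j, (V *ᵥ c) j ^ 2 := by simp [dotProduct, sq]
  have hxy : c ⬝ᵥ (V *ᵥ c) = ∑ j, c j * (V *ᵥ c) j := rfl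
  have hnn : 0 ≤ c ⬝ᵥ c := by rw [hxx]; positivity
  nlinarith [hcs, hnorm, hxx, hyy, hnn, hxy]

/-- Expansion of the squared Frobenius norm for orthogonal `U`. -/
lemma fnorm_sq_expand {n : ℕ} (A B : Matrix (Fin n) (Fin n) ℝ)
    (hA : A.PosDef) (hB : B.PosDef) (U : Matrix (Fin n) (Fin n) ℝ) (hU : Uᵀ * U = 1) :
    (fnorm (msqrt A - msqrt B * U)) ^ 2 =
      A.trace + B.trace - 2 * (Uᵀ * (msqrt B * msqrt A)).trace := by
  have hAp := hA.posSemidef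
  have hBp := hB.posSemidef
  have h0 : (fnorm (msqrt A - msqrt B * U)) ^ 2 = ∑ i, ∑ j, ((msqrt A - msqrt B * U) i j) ^ 2 := by
    rw [fnorm, Real.sq_sqrt (by positivity)]
  rw [h0, sum_sq_eq_trace]
  have hUU : U * Uᵀ = 1 := mul_eq_one_comm.mp hU
  have hsA := msqrt_transpose hAp
  have hsB := msqrt_transpose hBp
  have hexp : (msqrt A - msqrt B * U)ᵀ * (msqrt A - msqrt B * U) =
      A - msqrt A * (msqrt B * U) - Uᵀ * (msqrt B * msqrt A) + Uᵀ * B * U := by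
    rw [Matrix.transpose_sub, Matrix.transpose_mul, hsA, hsB]
    have h1 : (msqrt A - Uᵀ * msqrt B) * (msqrt A - msqrt B * U) =
        msqrt A * msqrt A - msqrt A * (msqrt B * U) - Uᵀ * (msqrt B * msqrt A)
          + Uᵀ * (msqrt B * msqrt B) * U := by noncomm_ring
    rw [h1, msqrt_mul_self hAp, msqrt_mul_self hBp]
  rw [hexp]
  have htrB : (Uᵀ * B * U).trace = B.trace := by
    rw [Matrix.trace_mul_comm, ← Matrix.mul_assoc, hUU, Matrix.one_mul]
  have htrX : (msqrt A * (msqrt B * U)).trace = (Uᵀ * (msqrt B * msqrt A)).trace := by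
    rw [← Matrix.trace_transpose (msqrt A * (msqrt B * U))]
    congr 1
    rw [Matrix.transpose_mul, Matrix.transpose_mul, hsA, hsB, Matrix.mul_assoc]
  rw [Matrix.trace_add, Matrix.trace_sub, Matrix.trace_sub, htrB, htrX]
  ring

theorem stmt_5 {n : ℕ} (A B : Matrix (Fin n) (Fin n) ℝ)
    (hA : A.PosDef) (hB : B.PosDef) :
    sInf {d : ℝ | ∃ U : Matrix (Fin n) (Fin n) ℝ, Uᵀ * U = 1 ∧
        d = (fnorm (msqrt A - msqrt B * U)) ^ 2} =
    A.trace + B.trace - 2 * (msqrt (msqrt A * B * msqrt A)).trace := by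
  have hAp := hA.posSemidef
  have hBp := hB.posSemidef
  set sA := msqrt A with hsAdef
  set sB := msqrt B with hsBdef
  have hsA : sAᵀ = sA := msqrt_transpose hAp
  have hsB : sBᵀ = sB := msqrt_transpose hBp
  set C : Matrix (Fin n) (Fin n) ℝ := sB * sA with hCdef
  set P : Matrix (Fin n) (Fin n) ℝ := sA * B * sA with hPdef
  have hPpsd : P.PosSemidef := by
    have := hBp.conjTranspose_mul_mul_same sA
    rwa [conjTranspose_eq_transpose_of_trivial, hsA] at this
  set S : Matrix (Fin n) (Fin n) ℝ := msqrt P with hSdef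
  have hSS : S * S = P := msqrt_mul_self hPpsd
  have hSsym : Sᵀ = S := msqrt_transpose hPpsd
  have hSpsd : S.PosSemidef := msqrt_psd hPpsd
  have hCtC : Cᵀ * C = P := by
    rw [hCdef, Matrix.transpose_mul, hsA, hsB, hPdef, ← msqrt_mul_self hBp]
    noncomm_ring
  -- determinants
  have hdetA : sA.det ≠ 0 := by
    intro h
    have h2 : sA.det * sA.det = A.det := by rw [← Matrix.det_mul, msqrt_mul_self hAp]
    rw [h, mul_zero] at h2
    exact hA.det_pos.ne' h2.symm
  have hdetP : P.det ≠ 0 := by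
    rw [hPdef, Matrix.det_mul, Matrix.det_mul]
    exact mul_ne_zero (mul_ne_zero hdetA hB.det_pos.ne') hdetA
  have hdetS : S.det ≠ 0 := by
    intro h
    have : S.det * S.det = P.det := by rw [← Matrix.det_mul, hSS]
    rw [h, mul_zero] at this
    exact hdetP this.symm
  have hdetS' : IsUnit S.det := isUnit_iff_ne_zero.mpr hdetS
  have hSinv : S⁻¹ * S = 1 := Matrix.nonsing_inv_mul S hdetS'
  have hSinv' : S * S⁻¹ = 1 := Matrix.mul_nonsing_inv S hdetS'
  set U₀ : Matrix (Fin n) (Fin n) ℝ := C * S⁻¹ with hU₀def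
  have hU₀t : U₀ᵀ = S⁻¹ * Cᵀ := by
    rw [hU₀def, Matrix.transpose_mul, Matrix.transpose_nonsing_inv, hSsym]
  have hU₀ : U₀ᵀ * U₀ = 1 := by
    rw [hU₀t, hU₀def]
    calc S⁻¹ * Cᵀ * (C * S⁻¹) = S⁻¹ * (Cᵀ * C) * S⁻¹ := by noncomm_ring
      _ = S⁻¹ * (S * S) * S⁻¹ := by rw [hCtC, hSS]
      _ = (S⁻¹ * S) * (S * S⁻¹) := by noncomm_ring
      _ = 1 := by rw [hSinv, hSinv', Matrix.one_mul]
  have hU₀C : U₀ᵀ * C = S := by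
    rw [hU₀t, Matrix.mul_assoc, hCtC, ← hSS, ← Matrix.mul_assoc, hSinv, Matrix.one_mul]
  have hCfact : C = U₀ * S := by
    rw [hU₀def, Matrix.mul_assoc, hSinv, Matrix.mul_one]
  -- the key inequality
  have hkey : ∀ U : Matrix (Fin n) (Fin n) ℝ, Uᵀ * U = 1 → (Uᵀ * C).trace ≤ S.trace := by
    intro U hU
    have hUU : U * Uᵀ = 1 := mul_eq_one_comm.mp hU
    have hVorth : (Uᵀ * U₀)ᵀ * (Uᵀ * U₀) = 1 := by
      rw [Matrix.transpose_mul, Matrix.transpose_transpose]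
      calc U₀ᵀ * U * (Uᵀ * U₀) = U₀ᵀ * (U * Uᵀ) * U₀ := by noncomm_ring
        _ = U₀ᵀ * U₀ := by rw [hUU, Matrix.mul_one]
        _ = 1 := hU₀
    have := trace_orth_mul_le (Uᵀ * U₀) S hVorth hSpsd
    rwa [Matrix.mul_assoc, ← hCfact] at this
  set v : ℝ := A.trace + B.trace - 2 * S.trace with hvdef
  have hmem : v ∈ {d : ℝ | ∃ U : Matrix (Fin n) (Fin n) ℝ, Uᵀ * U = 1 ∧
      d = (fnorm (msqrt A - msqrt B * U)) ^ 2} := by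
    refine ⟨U₀, hU₀, ?_⟩
    rw [fnorm_sq_expand A B hA hB U₀ hU₀, ← hsAdef, ← hsBdef, ← hCdef, hU₀C]
  have hlb : ∀ d ∈ {d : ℝ | ∃ U : Matrix (Fin n) (Fin n) ℝ, Uᵀ * U = 1 ∧
      d = (fnorm (msqrt A - msqrt B * U)) ^ 2}, v ≤ d := by
    rintro d ⟨U, hU, rfl⟩
    rw [fnorm_sq_expand A B hA hB U hU, ← hsAdef, ← hsBdef, ← hCdef]
    have := hkey U hU
    rw [hvdef]
    linarith
  have : sInf {d : ℝ | ∃ U : Matrix (Fin n) (Fin n) ℝ, Uᵀ * U = 1 ∧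
      d = (fnorm (msqrt A - msqrt B * U)) ^ 2} = v :=
    le_antisymm (csInf_le ⟨v, hlb⟩ hmem) (le_csInf ⟨v, hmem⟩ hlb)
  rw [this, hvdef]
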